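/- arXiv:2009.13218 — 2 statements merged into one kernel-verified Lean document; each statement's English description precedes it below -/
import Mathlib

section
/- Let n ≥ 3. The graph ORTHO is connected and its diameter equals 3. -/
/-- A matrix over `R = {0,-1} ⊆ ℤ` is normal: zero diagonal, entries `0` or `-1`. -/
def IsNormal {n : ℕ} (A : Matrix (Fin n) (Fin n) ℤ) : Prop :=
  (∀ i, A i i = 0) ∧ ∀ i j, A i j = 0 ∨ A i j = -1

/-- Tropical (max-plus) matrix product: `(A⊙B) i j = max_k (A i k + B k j)`. -/
noncomputable def tropMul {n : ℕ} (A B : Matrix (Fin n) (Fin n) ℤ) :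
    Matrix (Fin n) (Fin n) ℤ :=
  Matrix.of fun i j => sSup (Set.range fun k => A i k + B k j)

/-- Tropical sum: entrywise maximum. -/
def tropSum {n : ℕ} (A B : Matrix (Fin n) (Fin n) ℤ) : Matrix (Fin n) (Fin n) ℤ :=
  Matrix.of fun i j => max (A i j) (B i j)

/-- `A` is strictly normal: zero diagonal and all off-diagonal entries equal `-1`. -/
def IsStrictlyNormal {n : ℕ} (A : Matrix (Fin n) (Fin n) ℤ) : Prop :=
  (∀ i, A i i = 0) ∧ ∀ i j, i ≠ j → A i j = -1

/-- `A ∈ V(p;q)`: the `p`-th row and the `q`-th column of `A` are zero. -/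
def memV {n : ℕ} (p q : Fin n) (A : Matrix (Fin n) (Fin n) ℤ) : Prop :=
  ∀ i, A p i = 0 ∧ A i q = 0

/-- `A ∈ W(p;q)`: `A p i = 0` for `i ≠ q` and `A i q = 0` for `i ≠ p`. -/
def memW {n : ℕ} (p q : Fin n) (A : Matrix (Fin n) (Fin n) ℤ) : Prop :=
  (∀ i, i ≠ q → A p i = 0) ∧ (∀ i, i ≠ p → A i q = 0)

/-- Vertices of `ORTHO`: normal matrices that are neither strictly normal nor zero. -/
def OrthoVertex (n : ℕ) : Type :=
  {A : Matrix (Fin n) (Fin n) ℤ // IsNormal A ∧ ¬ IsStrictlyNormal A ∧ A ≠ 0}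

/-- The graph `ORTHO`: distinct vertices are adjacent iff mutually orthogonal. -/
noncomputable def orthoGraph (n : ℕ) : SimpleGraph (OrthoVertex n) where
  Adj X Y := X ≠ Y ∧ tropMul X.1 Y.1 = 0 ∧ tropMul Y.1 X.1 = 0
  symm := by
    constructor
    rintro X Y ⟨hne, h1, h2⟩
    exact ⟨hne.symm, h2, h1⟩
  loopless := ⟨fun X h => h.1 rfl⟩

/-- Vertices of `VNL`: nonzero normal matrices in some `V(p;q)` with `p ≠ q`. -/
def VNLVertex (n : ℕ) : Type :=
  {A : Matrix (Fin n) (Fin n) ℤ //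
    IsNormal A ∧ A ≠ 0 ∧ ∃ p q : Fin n, p ≠ q ∧ memV p q A}

/-- The graph `VNL`: distinct vertices `A, B` are adjacent iff there are `p, q`
with `A ∈ V(p;q)` and `B ∈ V(q;p)`. -/
def vnlGraph (n : ℕ) : SimpleGraph (VNLVertex n) where
  Adj X Y := X ≠ Y ∧ ∃ p q : Fin n, memV p q X.1 ∧ memV q p Y.1
  symm := by
    constructor
    rintro X Y ⟨hne, p, q, h1, h2⟩
    exact ⟨hne.symm, q, p, h2, h1⟩
  loopless := ⟨fun X h => h.1 rfl⟩

/-- Vertices of `WNL`: nonzero normal matrices in some `W(p;q)` with `p ≠ q`. -/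
def WNLVertex (n : ℕ) : Type :=
  {A : Matrix (Fin n) (Fin n) ℤ //
    IsNormal A ∧ A ≠ 0 ∧ ∃ p q : Fin n, p ≠ q ∧ memW p q A}

/-- The graph `WNL`: distinct vertices `A, B` are adjacent iff there are `k, m`
with one of the three `W`/`Z` sufficient conditions. -/
def wnlGraph (n : ℕ) : SimpleGraph (WNLVertex n) where
  Adj X Y := X ≠ Y ∧ ∃ k m : Fin n,
    (memW k m X.1 ∧ X.1 k m = 0 ∧ X.1 m k = 0 ∧ memW m k Y.1) ∨
    (memW k m X.1 ∧ X.1 m k = 0 ∧ memW m k Y.1 ∧ Y.1 k m = 0) ∨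
    (memW k m X.1 ∧ memW m k Y.1 ∧ Y.1 k m = 0 ∧ Y.1 m k = 0)
  symm := by
    constructor
    rintro X Y ⟨hne, k, m, hc⟩
    exact ⟨hne.symm, m, k, by tauto⟩
  loopless := ⟨fun X h => h.1 rfl⟩


section OrthoAux

variable {n : ℕ}

lemma tropMul_eq_zero_iff (hn : 0 < n) {A B : Matrix (Fin n) (Fin n) ℤ}
    (hA : IsNormal A) (hB : IsNormal B) :
    tropMul A B = 0 ↔ ∀ i j, ∃ k, A i k = 0 ∧ B k j = 0 := by
  haveI hne : Nonempty (Fin n) := ⟨⟨0, hn⟩⟩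
  constructor
  · intro h i j
    obtain ⟨k, hk⟩ := Finite.exists_max (fun k => A i k + B k j)
    have hsup : tropMul A B i j = A i k + B k j := by
      show sSup (Set.range fun m => A i m + B m j) = _
      apply le_antisymm
      · exact csSup_le (Set.range_nonempty _) (by rintro x ⟨m, rfl⟩; exact hk m)
      · exact le_csSup (Set.finite_range _).bddAbove ⟨k, rfl⟩
    have h0 : tropMul A B i j = 0 := by rw [h]; rfl
    rw [h0] at hsup
    rcases hA.2 i k with h1 | h1 <;> rcases hB.2 k j with h2 | h2 <;>
      first | exact ⟨k, h1, h2⟩ | omega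
  · intro h
    ext i j
    obtain ⟨k, hk1, hk2⟩ := h i j
    show sSup (Set.range fun m => A i m + B m j) = 0
    apply le_antisymm
    · apply csSup_le (Set.range_nonempty _)
      rintro x ⟨m, rfl⟩
      show A i m + B m j ≤ 0
      rcases hA.2 i m with h1 | h1 <;> rcases hB.2 m j with h2 | h2 <;> omega
    · exact le_csSup (Set.finite_range _).bddAbove ⟨k, by simp [hk1, hk2]⟩

/-- The matrix with a single `-1` at position `(p, q)`. -/
def EmatO (n : ℕ) (p q : Fin n) : Matrix (Fin n) (Fin n) ℤ :=
  Matrix.of fun i j => if i = p ∧ j = q then -1 else 0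

lemma EmatO_apply (p q i j : Fin n) :
    EmatO n p q i j = if i = p ∧ j = q then -1 else 0 := rfl

lemma EmatO_normal (p q : Fin n) (hpq : p ≠ q) : IsNormal (EmatO n p q) := by
  constructor
  · intro i
    rw [EmatO_apply, if_neg]
    rintro ⟨h1, h2⟩
    exact hpq (h1.symm.trans h2)
  · intro i j
    by_cases h : i = p ∧ j = q
    · exact Or.inr (by rw [EmatO_apply, if_pos h])
    · exact Or.inl (by rw [EmatO_apply, if_neg h])

/-- `EmatO` as a vertex of `ORTHO`. -/
def EvertO (hn : 3 ≤ n) (p q : Fin n) (hpq : p ≠ q) : OrthoVertex n :=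
  ⟨EmatO n p q, EmatO_normal p q hpq,
   fun hs => by
     have h := hs.2 q p hpq.symm
     rw [EmatO_apply, if_neg (fun hc => hpq hc.1.symm)] at h
     norm_num at h,
   fun h0 => by
     have h := congrArg (fun M : Matrix (Fin n) (Fin n) ℤ => M p q) h0
     simp only [Matrix.zero_apply] at h
     rw [EmatO_apply, if_pos ⟨rfl, rfl⟩] at h
     norm_num at h⟩

lemma adj_EvertO (hn : 3 ≤ n) (u : OrthoVertex n) (p q : Fin n) (hpq : p ≠ q)
    (h : u.1 p q = 0) : (orthoGraph n).Adj u (EvertO hn p q hpq) := by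
  have hn0 : 0 < n := by omega
  refine ⟨?_, ?_, ?_⟩
  · intro heq
    have h2 : u.1 p q = EmatO n p q p q := by rw [heq]; rfl
    rw [h, EmatO_apply, if_pos ⟨rfl, rfl⟩] at h2
    norm_num at h2
  · rw [show (EvertO hn p q hpq).1 = EmatO n p q from rfl,
      tropMul_eq_zero_iff hn0 u.2.1 (EmatO_normal p q hpq)]
    intro i j
    by_cases hij : i = p ∧ j = q
    · refine ⟨q, ?_, ?_⟩
      · rw [hij.1]; exact h
      · rw [EmatO_apply, if_neg (fun hc => hpq hc.1.symm)]
    · exact ⟨i, u.2.1.1 i, by rw [EmatO_apply, if_neg hij]⟩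
  · rw [show (EvertO hn p q hpq).1 = EmatO n p q from rfl,
      tropMul_eq_zero_iff hn0 (EmatO_normal p q hpq) u.2.1]
    intro i j
    by_cases hij : i = p ∧ j = q
    · refine ⟨p, ?_, ?_⟩
      · rw [EmatO_apply, if_neg (fun hc => hpq hc.2)]
      · rw [hij.2]; exact h
    · exact ⟨j, by rw [EmatO_apply, if_neg hij], u.2.1.1 j⟩

lemma exists_third (hn : 3 ≤ n) (a b : Fin n) : ∃ c : Fin n, c ≠ a ∧ c ≠ b := by
  by_contra hc
  push_neg at hc
  have hsub : (Finset.univ : Finset (Fin n)) ⊆ {a, b} := by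
    intro c _
    simp only [Finset.mem_insert, Finset.mem_singleton]
    rcases eq_or_ne c a with h | h
    · exact Or.inl h
    · exact Or.inr (hc c h)
  have h1 := Finset.card_le_card hsub
  have h2 : ({a, b} : Finset (Fin n)).card ≤ 2 :=
    le_trans (Finset.card_insert_le _ _) (by simp)
  rw [Finset.card_univ, Fintype.card_fin] at h1
  omega

lemma EmatO_orth (hn : 3 ≤ n) (p q r s : Fin n) (hpq : p ≠ q) (hrs : r ≠ s) :
    tropMul (EmatO n p q) (EmatO n r s) = 0 := by
  rw [tropMul_eq_zero_iff (by omega) (EmatO_normal p q hpq) (EmatO_normal r s hrs)]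
  intro i j
  obtain ⟨k, hk1, hk2⟩ := exists_third hn q r
  exact ⟨k, by rw [EmatO_apply, if_neg (fun hc => hk1 hc.2)],
    by rw [EmatO_apply, if_neg (fun hc => hk2 hc.1)]⟩

lemma exists_zero_entry (u : OrthoVertex n) : ∃ p q : Fin n, p ≠ q ∧ u.1 p q = 0 := by
  have hns := u.2.2.1
  rw [IsStrictlyNormal] at hns
  push_neg at hns
  obtain ⟨i, j, hij, hne⟩ := hns u.2.1.1
  rcases u.2.1.2 i j with h | h
  · exact ⟨i, j, hij, h⟩
  · exact absurd h hne

lemma exists_short_walk (hn : 3 ≤ n) (u v : OrthoVertex n) :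
    ∃ w : (orthoGraph n).Walk u v, w.length ≤ 3 := by
  obtain ⟨p, q, hpq, hu⟩ := exists_zero_entry u
  obtain ⟨r, s, hrs, hv⟩ := exists_zero_entry v
  have h1 := adj_EvertO hn u p q hpq hu
  have h2 := adj_EvertO hn v r s hrs hv
  by_cases he : EvertO hn p q hpq = EvertO hn r s hrs
  · refine ⟨SimpleGraph.Walk.cons h1
      (SimpleGraph.Walk.cons (he.symm ▸ h2.symm) SimpleGraph.Walk.nil), ?_⟩
    simp [SimpleGraph.Walk.length_cons, SimpleGraph.Walk.length_nil]
  · refine ⟨SimpleGraph.Walk.cons h1 (SimpleGraph.Walk.cons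
      ⟨he, EmatO_orth hn p q r s hpq hrs, EmatO_orth hn r s p q hrs hpq⟩
      (SimpleGraph.Walk.cons h2.symm SimpleGraph.Walk.nil)), ?_⟩
    exact le_of_eq rfl

/-- The matrix that is `-1` everywhere off the diagonal except at `(p, q)`. -/
def AmatO (n : ℕ) (p q : Fin n) : Matrix (Fin n) (Fin n) ℤ :=
  Matrix.of fun i j => if i = j ∨ (i = p ∧ j = q) then 0 else -1

lemma AmatO_apply (p q i j : Fin n) :
    AmatO n p q i j = if i = j ∨ (i = p ∧ j = q) then 0 else -1 := rfl

lemma AmatO_normal (p q : Fin n) : IsNormal (AmatO n p q) :=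
  ⟨fun i => by rw [AmatO_apply, if_pos (Or.inl rfl)],
   fun i j => by
     by_cases h : i = j ∨ (i = p ∧ j = q)
     · exact Or.inl (by rw [AmatO_apply, if_pos h])
     · exact Or.inr (by rw [AmatO_apply, if_neg h])⟩

/-- `AmatO` as a vertex of `ORTHO`. -/
def AvertO (hn : 3 ≤ n) (p q : Fin n) (hpq : p ≠ q) : OrthoVertex n :=
  ⟨AmatO n p q, AmatO_normal p q,
   fun hs => by
     have h := hs.2 p q hpq
     rw [AmatO_apply, if_pos (Or.inr ⟨rfl, rfl⟩)] at h
     norm_num at h,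
   fun h0 => by
     have h := congrArg (fun M : Matrix (Fin n) (Fin n) ℤ => M q p) h0
     simp only [Matrix.zero_apply] at h
     rw [AmatO_apply, if_neg] at h
     · norm_num at h
     · rintro (h2 | ⟨h1, _⟩)
       · exact hpq h2.symm
       · exact hpq h1.symm⟩

lemma neighbor_eq (hn : 3 ≤ n) (p q : Fin n) (hpq : p ≠ q) (C : OrthoVertex n)
    (h : (orthoGraph n).Adj (AvertO hn p q hpq) C) : C.1 = EmatO n p q := by
  have hn0 : (0 : ℕ) < n := by omega
  obtain ⟨hne, ho1, ho2⟩ := h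
  rw [show (AvertO hn p q hpq).1 = AmatO n p q from rfl,
    tropMul_eq_zero_iff hn0 (AmatO_normal p q) C.2.1] at ho1
  rw [show (AvertO hn p q hpq).1 = AmatO n p q from rfl,
    tropMul_eq_zero_iff hn0 C.2.1 (AmatO_normal p q)] at ho2
  have hrow : ∀ i j : Fin n, i ≠ p → C.1 i j = 0 := by
    intro i j hip
    obtain ⟨k, hk1, hk2⟩ := ho1 i j
    rw [AmatO_apply] at hk1
    by_cases hc : i = k ∨ (i = p ∧ k = q)
    · rcases hc with hc | hc
      · rwa [← hc] at hk2
      · exact absurd hc.1 hip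
    · rw [if_neg hc] at hk1; norm_num at hk1
  have hcol : ∀ i j : Fin n, j ≠ q → C.1 i j = 0 := by
    intro i j hjq
    obtain ⟨k, hk1, hk2⟩ := ho2 i j
    rw [AmatO_apply] at hk2
    by_cases hc : k = j ∨ (k = p ∧ j = q)
    · rcases hc with hc | hc
      · rwa [hc] at hk1
      · exact absurd hc.2 hjq
    · rw [if_neg hc] at hk2; norm_num at hk2
  have hC : C.1 p q = -1 := by
    rcases C.2.1.2 p q with h0 | h0
    · exfalso
      apply C.2.2.2
      ext i j
      by_cases hip : i = p
      · by_cases hjq : j = q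
        · rw [hip, hjq]; simpa using h0
        · simpa using hcol i j hjq
      · simpa using hrow i j hip
    · exact h0
  ext i j
  rw [EmatO_apply]
  by_cases hij : i = p ∧ j = q
  · rw [if_pos hij, hij.1, hij.2]; exact hC
  · rw [if_neg hij]
    rcases not_and_or.mp hij with h2 | h2
    · exact hrow i j h2
    · exact hcol i j h2

lemma walk_short_cases {V : Type*} {G : SimpleGraph V} {u v : V} (w : G.Walk u v)
    (h : w.length ≤ 2) : u = v ∨ G.Adj u v ∨ ∃ x, G.Adj u x ∧ G.Adj x v := by
  cases w with
  | nil => exact Or.inl rfl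
  | cons h1 w1 =>
    cases w1 with
    | nil => exact Or.inr (Or.inl h1)
    | cons h2 w2 =>
      cases w2 with
      | nil => exact Or.inr (Or.inr ⟨_, h1, h2⟩)
      | cons h3 w3 => simp only [SimpleGraph.Walk.length_cons] at h; omega

end OrthoAux

theorem stmt_18 (n : ℕ) (hn : 3 ≤ n) :
    (orthoGraph n).Connected ∧ (orthoGraph n).diam = 3 := by
  obtain ⟨a, b, c, hab, hac, hbc⟩ :
      ∃ a b c : Fin n, a ≠ b ∧ a ≠ c ∧ b ≠ c := by
    refine ⟨⟨0, by omega⟩, ⟨1, by omega⟩, ⟨2, by omega⟩, ?_, ?_, ?_⟩ <;> simp [Fin.ext_iff]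
  have hreach : ∀ u v : OrthoVertex n, (orthoGraph n).Reachable u v := by
    intro u v
    obtain ⟨w, _⟩ := exists_short_walk hn u v
    exact ⟨w⟩
  haveI : Nonempty (OrthoVertex n) := ⟨EvertO hn a b hab⟩
  have hconn : (orthoGraph n).Connected := ⟨hreach⟩
  have hup : (orthoGraph n).ediam ≤ 3 := by
    apply SimpleGraph.ediam_le_of_edist_le
    intro u v
    obtain ⟨w, hw⟩ := exists_short_walk hn u v
    calc (orthoGraph n).edist u v ≤ (w.length : ℕ∞) := SimpleGraph.edist_le w
      _ ≤ 3 := by exact_mod_cast hw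
  have hu0ab : (AvertO hn a b hab).1 a b = 0 := by
    rw [show (AvertO hn a b hab).1 = AmatO n a b from rfl,
      AmatO_apply, if_pos (Or.inr ⟨rfl, rfl⟩)]
  have hv0ab : (AvertO hn b a hab.symm).1 a b = -1 := by
    rw [show (AvertO hn b a hab.symm).1 = AmatO n b a from rfl, AmatO_apply, if_neg]
    rintro (h2 | ⟨h1, _⟩)
    · exact hab h2
    · exact hab h1
  have hval : ∀ (X Y : OrthoVertex n), X = Y → ∀ i j, X.1 i j = Y.1 i j := by
    rintro X Y rfl i j; rfl
  have huv : AvertO hn a b hab ≠ AvertO hn b a hab.symm := by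
    intro h
    have h2 := hval _ _ h a b
    rw [hu0ab, hv0ab] at h2
    norm_num at h2
  have hnadj : ¬ (orthoGraph n).Adj (AvertO hn a b hab) (AvertO hn b a hab.symm) := by
    intro h
    have hE := neighbor_eq hn a b hab _ h
    have h1 : (AvertO hn b a hab.symm).1 c a = -1 := by
      rw [show (AvertO hn b a hab.symm).1 = AmatO n b a from rfl, AmatO_apply, if_neg]
      rintro (h2 | ⟨h1, _⟩)
      · exact hac h2.symm
      · exact hbc h1.symm
    rw [hE] at h1
    rw [EmatO_apply, if_neg (fun hc2 => hac hc2.1.symm)] at h1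
    norm_num at h1
  have hnocommon : ∀ C : OrthoVertex n, (orthoGraph n).Adj (AvertO hn a b hab) C →
      (orthoGraph n).Adj (AvertO hn b a hab.symm) C → False := by
    intro C h1 h2
    have e1 := neighbor_eq hn a b hab C h1
    have e2 := neighbor_eq hn b a hab.symm C h2
    rw [e1] at e2
    have h3 : EmatO n a b a b = EmatO n b a a b := by rw [e2]
    rw [EmatO_apply, if_pos ⟨rfl, rfl⟩, EmatO_apply, if_neg (fun hc2 => hab hc2.1)] at h3
    norm_num at h3
  have hlow : 3 ≤ (orthoGraph n).edist (AvertO hn a b hab) (AvertO hn b a hab.symm) := by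
    by_contra hcon
    push_neg at hcon
    obtain ⟨w, hw⟩ := (hreach (AvertO hn a b hab) (AvertO hn b a hab.symm)).exists_walk_length_eq_edist
    have hlt : (w.length : ℕ∞) < 3 := by rw [hw]; exact hcon
    have hlen : w.length ≤ 2 := by
      have h4 : w.length < 3 := by exact_mod_cast hlt
      omega
    rcases walk_short_cases w hlen with h | h | ⟨x, hx1, hx2⟩
    · exact huv h
    · exact hnadj h
    · exact hnocommon x hx1 hx2.symm
  have hediam : (orthoGraph n).ediam = 3 :=
    le_antisymm hup (le_trans hlow SimpleGraph.edist_le_ediam)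
  refine ⟨hconn, ?_⟩
  show (orthoGraph n).ediam.toNat = 3
  rw [hediam]
  rfl
end

section
/- Let n ≥ 3. The diameter of the graph VNL equals 2. Moreover, for n ≥ 4 the diameter of the graph WNL equals 2. -/
namespace Stmt19Aux

open SimpleGraph

variable {n : ℕ}

lemma exists_ne2 (hn : 3 ≤ n) (a b : Fin n) : ∃ i : Fin n, i ≠ a ∧ i ≠ b := by
  by_contra h
  push_neg at h
  have hsub : (Finset.univ : Finset (Fin n)) ⊆ {a, b} := by
    intro i _
    simp only [Finset.mem_insert, Finset.mem_singleton]
    by_cases hia : i = a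
    · exact Or.inl hia
    · exact Or.inr (h i hia)
  have h1 := Finset.card_le_card hsub
  have h2 : ({a, b} : Finset (Fin n)).card ≤ 2 :=
    le_trans (Finset.card_insert_le _ _) (by simp)
  simp only [Finset.card_univ, Fintype.card_fin] at h1
  omega

lemma exists_ne3 (hn : 4 ≤ n) (a b c : Fin n) : ∃ i : Fin n, i ≠ a ∧ i ≠ b ∧ i ≠ c := by
  by_contra h
  push_neg at h
  have hsub : (Finset.univ : Finset (Fin n)) ⊆ {a, b, c} := by
    intro i _
    simp only [Finset.mem_insert, Finset.mem_singleton]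
    by_cases hia : i = a
    · exact Or.inl hia
    · by_cases hib : i = b
      · exact Or.inr (Or.inl hib)
      · exact Or.inr (Or.inr (h i hia hib))
  have h1 := Finset.card_le_card hsub
  have h2 : ({a, b, c} : Finset (Fin n)).card ≤ 3 :=
    le_trans (Finset.card_insert_le _ _)
      (by have := Finset.card_insert_le b ({c} : Finset (Fin n)); simp at this ⊢; omega)
  simp only [Finset.card_univ, Fintype.card_fin] at h1
  omega

/-- The single-entry matrix with `-1` at `(i,j)`. -/
def E (i j : Fin n) : Matrix (Fin n) (Fin n) ℤ :=
  Matrix.of fun a b => if a = i ∧ b = j then -1 else 0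

lemma E_apply (i j a b : Fin n) : E i j a b = if a = i ∧ b = j then -1 else 0 := rfl

lemma E_normal {i j : Fin n} (hij : i ≠ j) : IsNormal (E i j) := by
  constructor
  · intro a
    simp only [E_apply]
    rw [if_neg]
    rintro ⟨rfl, rfl⟩
    exact hij rfl
  · intro a b
    simp only [E_apply]
    by_cases h : a = i ∧ b = j <;> simp [h]

lemma E_ne_zero (i j : Fin n) : E i j ≠ 0 := by
  intro h
  have := congrFun (congrFun h i) j
  simp [E_apply] at this

lemma E_memV {i j a b : Fin n} (ha : a ≠ i) (hb : b ≠ j) : memV a b (E i j) := by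
  intro c
  constructor
  · simp only [E_apply]; rw [if_neg]; rintro ⟨rfl, rfl⟩; exact ha rfl
  · simp only [E_apply]; rw [if_neg]; rintro ⟨rfl, rfl⟩; exact hb rfl

lemma E_apply_zero {i j a b : Fin n} (h : ¬(a = i ∧ b = j)) : E i j a b = 0 := by
  simp only [E_apply]; rw [if_neg h]

lemma memV_memW {p q : Fin n} {A : Matrix (Fin n) (Fin n) ℤ} (h : memV p q A) : memW p q A :=
  ⟨fun i _ => (h i).1, fun i _ => (h i).2⟩

lemma keyV (hn : 3 ≤ n) {p q r s : Fin n} (hpq : p ≠ q) (hrs : r ≠ s) :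
    (∃ i j : Fin n, i ≠ j ∧ i ≠ q ∧ i ≠ s ∧ j ≠ p ∧ j ≠ r) ∨ (s = p ∧ r = q) := by
  by_cases hcase : ∃ i j : Fin n, i ≠ j ∧ i ≠ q ∧ i ≠ s ∧ j ≠ p ∧ j ≠ r
  · exact Or.inl hcase
  right
  push_neg at hcase
  obtain ⟨i0, hi0q, hi0s⟩ := exists_ne2 hn q s
  obtain ⟨j0, hj0p, hj0r⟩ := exists_ne2 hn p r
  have hx : i0 = j0 := by
    by_contra hne
    exact hj0r (hcase i0 j0 hne hi0q hi0s hj0p)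
  subst hx
  have H' : ∀ i : Fin n, i ≠ q → i ≠ s → i = i0 := by
    intro i hiq his
    by_contra hne
    exact hj0r (hcase i i0 hne hiq his hj0p)
  constructor
  · by_contra hsp
    have := H' p hpq (fun h => hsp h.symm)
    exact hj0p this.symm
  · by_contra hrq
    have := H' r (fun h => hrq h) hrs
    exact hj0r this.symm

lemma keyW (hn : 4 ≤ n) (p q r s : Fin n) :
    ∃ i j : Fin n, i ≠ j ∧ i ≠ q ∧ i ≠ s ∧ j ≠ p ∧ j ≠ r ∧
      ¬(i = p ∧ j = q) ∧ ¬(i = r ∧ j = s) := by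
  obtain ⟨j, hjp, hjr, hjq⟩ := exists_ne3 hn p r q
  by_cases hjs : j = s
  · obtain ⟨i, hiq, his, hir⟩ := exists_ne3 hn q s r
    exact ⟨i, j, fun h => his (h.trans hjs), hiq, his, hjp, hjr,
      fun h => hjq h.2, fun h => hir h.1⟩
  · obtain ⟨i, hiq, his, hij⟩ := exists_ne3 hn q s j
    exact ⟨i, j, hij, hiq, his, hjp, hjr, fun h => hjq h.2, fun h => hjs h.2⟩

lemma edist_le_two {α : Type*} {G : SimpleGraph α} {u v w : α}
    (h1 : G.Adj u w) (h2 : G.Adj w v) : G.edist u v ≤ 2 := by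
  calc G.edist u v ≤ G.edist u w + G.edist w v := SimpleGraph.edist_triangle
    _ ≤ 1 + 1 := add_le_add (le_of_eq (edist_eq_one_iff_adj.mpr h1))
        (le_of_eq (edist_eq_one_iff_adj.mpr h2))
    _ = 2 := by norm_num

lemma diam_eq_two_aux {α : Type*} (G : SimpleGraph α) (h2 : ∀ u v, G.edist u v ≤ 2)
    {u v : α} (hne : u ≠ v) (hnadj : ¬ G.Adj u v) : G.diam = 2 := by
  have he : G.ediam = 2 := by
    refine le_antisymm (SimpleGraph.ediam_le_of_edist_le h2) ?_
    have h0 : G.edist u v ≠ 0 := by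
      simp only [ne_eq, SimpleGraph.edist_eq_zero_iff]; exact hne
    have h1 : G.edist u v ≠ 1 := fun h => hnadj (edist_eq_one_iff_adj.mp h)
    have hle := h2 u v
    have h2' : (2 : ℕ∞) ≤ G.edist u v := by
      have htop : G.edist u v ≠ ⊤ := by
        intro h; rw [h] at hle; exact absurd hle (by norm_num)
      lift G.edist u v to ℕ using htop with e he'
      have e0 : e ≠ 0 := by exact_mod_cast h0
      have e1 : e ≠ 1 := by exact_mod_cast h1
      exact_mod_cast (by omega : 2 ≤ e)
    exact le_trans h2' SimpleGraph.edist_le_ediam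
  rw [SimpleGraph.diam, he]
  rfl

end Stmt19Aux

namespace Stmt19Aux

lemma vnl_edist_le (hn : 3 ≤ n) (X Y : VNLVertex n) : (vnlGraph n).edist X Y ≤ 2 := by
  by_cases hXY : X = Y
  · subst hXY; rw [SimpleGraph.edist_self]; norm_num
  by_cases hadj : (vnlGraph n).Adj X Y
  · rw [SimpleGraph.edist_eq_one_iff_adj.mpr hadj]; norm_num
  obtain ⟨hXn, hX0, p, q, hpq, hXV⟩ := X.2
  obtain ⟨hYn, hY0, r, s, hrs, hYV⟩ := Y.2
  rcases keyV hn hpq hrs with ⟨i, j, hij, hiq, his, hjp, hjr⟩ | ⟨hsp, hrq⟩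
  · have hZV1 : memV q p (E i j) := E_memV (Ne.symm hiq) (Ne.symm hjp)
    have hZV2 : memV s r (E i j) := E_memV (Ne.symm his) (Ne.symm hjr)
    set Z : VNLVertex n := ⟨E i j, E_normal hij, E_ne_zero i j, q, p, hpq.symm, hZV1⟩ with hZ
    have hXZ : (vnlGraph n).Adj X Z := by
      refine ⟨?_, p, q, hXV, hZV1⟩
      intro h
      exact hadj ⟨hXY, s, r, by rw [h]; exact hZV2, hYV⟩
    have hZY : (vnlGraph n).Adj Z Y := by
      refine ⟨?_, s, r, hZV2, hYV⟩
      intro h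
      exact hadj ⟨hXY, p, q, hXV, by rw [← h]; exact hZV1⟩
    exact edist_le_two hXZ hZY
  · exact absurd ⟨hXY, p, q, hXV, by rw [← hrq, ← hsp]; exact hYV⟩ hadj

lemma wnl_edist_le (hn : 4 ≤ n) (X Y : WNLVertex n) : (wnlGraph n).edist X Y ≤ 2 := by
  by_cases hXY : X = Y
  · subst hXY; rw [SimpleGraph.edist_self]; norm_num
  by_cases hadj : (wnlGraph n).Adj X Y
  · rw [SimpleGraph.edist_eq_one_iff_adj.mpr hadj]; norm_num
  obtain ⟨hXn, hX0, p, q, hpq, hXW⟩ := X.2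
  obtain ⟨hYn, hY0, r, s, hrs, hYW⟩ := Y.2
  obtain ⟨i, j, hij, hiq, his, hjp, hjr, hpq', hrs'⟩ := keyW hn p q r s
  have hZV1 : memV q p (E i j) := E_memV (Ne.symm hiq) (Ne.symm hjp)
  have hZV2 : memV s r (E i j) := E_memV (Ne.symm his) (Ne.symm hjr)
  have hzpq : E i j p q = 0 := E_apply_zero (fun h => hpq' ⟨h.1.symm, h.2.symm⟩)
  have hzqp : E i j q p = 0 := E_apply_zero (fun h => hiq h.1.symm)
  have hzsr : E i j s r = 0 := E_apply_zero (fun h => his h.1.symm)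
  have hzrs : E i j r s = 0 := E_apply_zero (fun h => hrs' ⟨h.1.symm, h.2.symm⟩)
  set Z : WNLVertex n := ⟨E i j, E_normal hij, E_ne_zero i j, q, p, hpq.symm,
    memV_memW hZV1⟩ with hZ
  have hXZ : (wnlGraph n).Adj X Z := by
    refine ⟨?_, p, q, Or.inr (Or.inr ⟨hXW, memV_memW hZV1, hzpq, hzqp⟩)⟩
    intro h
    refine hadj ⟨hXY, s, r, Or.inl ⟨?_, ?_, ?_, hYW⟩⟩
    · rw [h]; exact memV_memW hZV2
    · rw [h]; exact hzsr
    · rw [h]; exact hzrs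
  have hZY : (wnlGraph n).Adj Z Y := by
    refine ⟨?_, s, r, Or.inl ⟨memV_memW hZV2, hzsr, hzrs, hYW⟩⟩
    intro h
    refine hadj ⟨hXY, p, q, Or.inr (Or.inr ⟨hXW, ?_, ?_, ?_⟩)⟩
    · rw [← h]; exact memV_memW hZV1
    · rw [← h]; exact hzpq
    · rw [← h]; exact hzqp
  exact edist_le_two hXZ hZY

end Stmt19Aux

namespace Stmt19Aux

def XM (u v : Fin n) : Matrix (Fin n) (Fin n) ℤ :=
  Matrix.of fun a b => if a ≠ b ∧ a ≠ u ∧ b ≠ v then -1 else 0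

def YM (u v w : Fin n) : Matrix (Fin n) (Fin n) ℤ :=
  Matrix.of fun a b => if a ≠ b ∧ a ≠ u ∧ b ≠ v ∧ ¬(a = w ∧ b = u) then -1 else 0

lemma XM_apply (u v a b : Fin n) :
    XM u v a b = if a ≠ b ∧ a ≠ u ∧ b ≠ v then -1 else 0 := rfl

lemma YM_apply (u v w a b : Fin n) :
    YM u v w a b = if a ≠ b ∧ a ≠ u ∧ b ≠ v ∧ ¬(a = w ∧ b = u) then -1 else 0 := rfl

lemma XM_normal (u v : Fin n) : IsNormal (XM u v) := by
  constructor
  · intro a; simp [XM_apply]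
  · intro a b
    by_cases h : a ≠ b ∧ a ≠ u ∧ b ≠ v
    · right; rw [XM_apply, if_pos h]
    · left; rw [XM_apply, if_neg h]

lemma YM_normal (u v w : Fin n) : IsNormal (YM u v w) := by
  constructor
  · intro a; simp [YM_apply]
  · intro a b
    by_cases h : a ≠ b ∧ a ≠ u ∧ b ≠ v ∧ ¬(a = w ∧ b = u)
    · right; rw [YM_apply, if_pos h]
    · left; rw [YM_apply, if_neg h]

lemma XM_ne_zero {u v : Fin n} (huv : u ≠ v) : XM u v ≠ 0 := by
  intro h
  have := congrFun (congrFun h v) u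
  rw [XM_apply, Matrix.zero_apply, if_pos ⟨Ne.symm huv, Ne.symm huv, huv⟩] at this
  norm_num at this

lemma YM_ne_zero {u v w : Fin n} (huv : u ≠ v) (hwv : w ≠ v) : YM u v w ≠ 0 := by
  intro h
  have := congrFun (congrFun h v) u
  rw [YM_apply, Matrix.zero_apply,
    if_pos ⟨Ne.symm huv, Ne.symm huv, huv, fun hc => hwv hc.1.symm⟩] at this
  norm_num at this

lemma XM_ne_YM {u v w : Fin n} (huv : u ≠ v) (hwu : w ≠ u) : XM u v ≠ YM u v w := by
  intro h
  have := congrFun (congrFun h w) u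
  rw [XM_apply, YM_apply, if_pos ⟨hwu, hwu, huv⟩,
    if_neg (fun hc => hc.2.2.2 ⟨rfl, rfl⟩)] at this
  norm_num at this

lemma XM_memV (u v : Fin n) : memV u v (XM u v) := by
  intro c
  constructor
  · rw [XM_apply, if_neg]; rintro ⟨-, h, -⟩; exact h rfl
  · rw [XM_apply, if_neg]; rintro ⟨-, -, h⟩; exact h rfl

lemma YM_memV (u v w : Fin n) : memV u v (YM u v w) := by
  intro c
  constructor
  · rw [YM_apply, if_neg]; rintro ⟨-, h, -⟩; exact h rfl
  · rw [YM_apply, if_neg]; rintro ⟨-, -, h, -⟩; exact h rfl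

lemma XM_memV_unique (hn : 3 ≤ n) {u v a b : Fin n}
    (h : memV a b (XM u v)) : a = u ∧ b = v := by
  constructor
  · by_contra ha
    obtain ⟨c, hca, hcv⟩ := exists_ne2 hn a v
    have h0 := (h c).1
    rw [XM_apply, if_pos ⟨Ne.symm hca, ha, hcv⟩] at h0
    norm_num at h0
  · by_contra hb
    obtain ⟨c, hcu, hcb⟩ := exists_ne2 hn u b
    have h0 := (h c).2
    rw [XM_apply, if_pos ⟨hcb, hcu, hb⟩] at h0
    norm_num at h0

lemma vnl_nonadj_mat (hn : 3 ≤ n) {u v w : Fin n} (huv : u ≠ v) (hwv : w ≠ v) :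
    ¬ ∃ a b : Fin n, memV a b (XM u v) ∧ memV b a (YM u v w) := by
  rintro ⟨a, b, hX, hY⟩
  obtain ⟨ha, hb⟩ := XM_memV_unique hn hX
  rw [ha, hb] at hY
  have h0 := (hY u).1
  rw [YM_apply, if_pos ⟨Ne.symm huv, Ne.symm huv, huv, fun hc => hwv hc.1.symm⟩] at h0
  norm_num at h0

lemma XM_memW_unique (hn : 4 ≤ n) {u v k m : Fin n}
    (h : memW k m (XM u v)) : k = u ∧ m = v := by
  constructor
  · by_contra hk
    obtain ⟨c, hcm, hck, hcv⟩ := exists_ne3 hn m k v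
    have h0 := h.1 c hcm
    rw [XM_apply, if_pos ⟨Ne.symm hck, hk, hcv⟩] at h0
    norm_num at h0
  · by_contra hm
    obtain ⟨c, hck, hcu, hcm⟩ := exists_ne3 hn k u m
    have h0 := h.2 c hck
    rw [XM_apply, if_pos ⟨hcm, hcu, hm⟩] at h0
    norm_num at h0

lemma wnl_nonadj_mat (hn : 4 ≤ n) {u v w : Fin n} (huv : u ≠ v) (hwu : w ≠ u) (hwv : w ≠ v) :
    ¬ ∃ k m : Fin n,
      (memW k m (XM u v) ∧ XM u v k m = 0 ∧ XM u v m k = 0 ∧ memW m k (YM u v w)) ∨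
      (memW k m (XM u v) ∧ XM u v m k = 0 ∧ memW m k (YM u v w) ∧ YM u v w k m = 0) ∨
      (memW k m (XM u v) ∧ memW m k (YM u v w) ∧ YM u v w k m = 0 ∧ YM u v w m k = 0) := by
  rintro ⟨k, m, hc⟩
  have hXW : memW k m (XM u v) := by rcases hc with h | h | h <;> exact h.1
  have hYW : memW m k (YM u v w) := by
    rcases hc with h | h | h
    · exact h.2.2.2
    · exact h.2.2.1
    · exact h.2.1
  obtain ⟨hk, hm⟩ := XM_memW_unique hn hXW
  rw [hk, hm] at hYW
  have h0 := hYW.1 w hwu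
  rw [YM_apply, if_pos ⟨Ne.symm hwv, Ne.symm huv, hwv, fun hc => hwv hc.1.symm⟩] at h0
  norm_num at h0

end Stmt19Aux

open Stmt19Aux
theorem stmt_19 (n : ℕ) (hn : 3 ≤ n) :
    (vnlGraph n).diam = 2 ∧ (4 ≤ n → (wnlGraph n).diam = 2) := by
  set u : Fin n := ⟨0, by omega⟩ with hu
  set v : Fin n := ⟨1, by omega⟩ with hv
  set w : Fin n := ⟨2, by omega⟩ with hw
  have huv : u ≠ v := by simp [hu, hv, Fin.ext_iff]
  have hwu : w ≠ u := by simp [hu, hw, Fin.ext_iff]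
  have hwv : w ≠ v := by simp [hv, hw, Fin.ext_iff]
  constructor
  · set XV : VNLVertex n :=
      ⟨XM u v, XM_normal u v, XM_ne_zero huv, u, v, huv, XM_memV u v⟩ with hXV
    set YV : VNLVertex n :=
      ⟨YM u v w, YM_normal u v w, YM_ne_zero huv hwv, u, v, huv, YM_memV u v w⟩ with hYV
    have hne : XV ≠ YV := fun h => XM_ne_YM huv hwu (congrArg Subtype.val h)
    have hnadj : ¬ (vnlGraph n).Adj XV YV := by
      rintro ⟨-, a, b, hX, hY⟩
      exact vnl_nonadj_mat hn huv hwv ⟨a, b, hX, hY⟩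
    exact diam_eq_two_aux _ (vnl_edist_le hn) hne hnadj
  · intro hn4
    set XV : WNLVertex n :=
      ⟨XM u v, XM_normal u v, XM_ne_zero huv, u, v, huv, memV_memW (XM_memV u v)⟩ with hXV
    set YV : WNLVertex n :=
      ⟨YM u v w, YM_normal u v w, YM_ne_zero huv hwv, u, v, huv,
        memV_memW (YM_memV u v w)⟩ with hYV
    have hne : XV ≠ YV := fun h => XM_ne_YM huv hwu (congrArg Subtype.val h)
    have hnadj : ¬ (wnlGraph n).Adj XV YV := by
      rintro ⟨-, k, m, hc⟩
      exact wnl_nonadj_mat hn4 huv hwu hwv ⟨k, m, hc⟩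
    exact diam_eq_two_aux _ (wnl_edist_le hn4) hne hnadj
end
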